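/- Let S be a nonempty finite set, let L : S → ℕ satisfy the Kraft inequality ∑_{x∈S} 2^{−L(x)} ≤ 1, and let G : S → {1, …, |S|} be any bijection that orders S by non-decreasing values of L (i.e., L(x) < L(x') implies G(x) < G(x')). Then for every probability distribution P on S and every ρ > 0: ∑_{x∈S} P(x) G(x)^ρ ≤ 2^ρ ∑_{x∈S} P(x) 2^{ρ L(x)}. -/
import Mathlib

lemma guess_le_pow {S : Type*} [Fintype S]
    (L : S → ℕ) (hKraft : ∑ x : S, (1 : ℝ) / 2 ^ L x ≤ 1)
    (G : S → ℕ) (hGinj : Function.Injective G)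
    (hGrange : ∀ x, G x ∈ Finset.Icc 1 (Fintype.card S))
    (hGmono : ∀ x x', L x < L x' → G x < G x') (x : S) :
    (G x : ℝ) ≤ 2 ^ L x := by
  classical
  set n := Fintype.card S
  have himg : Finset.univ.image G = Finset.Icc 1 n := by
    apply Finset.eq_of_subset_of_card_le
    · intro y hy
      simp only [Finset.mem_image] at hy
      obtain ⟨x', _, rfl⟩ := hy
      exact hGrange x'
    · rw [Finset.card_image_of_injective _ hGinj]
      simp [n, Nat.card_Icc]
  set B := Finset.univ.filter (fun x' => G x' ≤ G x) with hB
  have hBimg : B.image G = Finset.Icc 1 (G x) := by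
    ext y
    simp only [Finset.mem_image, Finset.mem_Icc, hB, Finset.mem_filter, Finset.mem_univ,
      true_and]
    constructor
    · rintro ⟨x', hx', rfl⟩
      exact ⟨(Finset.mem_Icc.mp (hGrange x')).1, hx'⟩
    · rintro ⟨h1, h2⟩
      have : y ∈ Finset.univ.image G := by
        rw [himg, Finset.mem_Icc]
        exact ⟨h1, le_trans h2 (Finset.mem_Icc.mp (hGrange x)).2⟩
      simp only [Finset.mem_image, Finset.mem_univ, true_and] at this
      obtain ⟨x', rfl⟩ := this
      exact ⟨x', h2, rfl⟩
  have hBcard : B.card = G x := by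
    rw [← Finset.card_image_of_injective B hGinj, hBimg, Nat.card_Icc]
    simp
  set A := Finset.univ.filter (fun x' => L x' ≤ L x) with hA
  have hBA : B ⊆ A := by
    intro x' hx'
    simp only [hB, Finset.mem_filter, Finset.mem_univ, true_and] at hx'
    simp only [hA, Finset.mem_filter, Finset.mem_univ, true_and]
    by_contra h
    exact absurd (hGmono x x' (lt_of_not_ge h)) (not_lt.mpr hx')
  -- Kraft on A
  have hAsum : (A.card : ℝ) * (1 / 2 ^ L x) ≤ 1 := by
    calc (A.card : ℝ) * (1 / 2 ^ L x) = ∑ x' ∈ A, (1 : ℝ) / 2 ^ L x := by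
          rw [Finset.sum_const, nsmul_eq_mul]
      _ ≤ ∑ x' ∈ A, (1 : ℝ) / 2 ^ L x' := by
          apply Finset.sum_le_sum
          intro x' hx'
          simp only [hA, Finset.mem_filter, Finset.mem_univ, true_and] at hx'
          apply div_le_div_of_nonneg_left (by norm_num) (by positivity)
          exact pow_le_pow_right₀ (by norm_num) hx'
      _ ≤ ∑ x' : S, (1 : ℝ) / 2 ^ L x' := by
          apply Finset.sum_le_sum_of_subset_of_nonneg (Finset.subset_univ A)
          intro i _ _; positivity
      _ ≤ 1 := hKraft
  have hpow : (0 : ℝ) < 2 ^ L x := by positivity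
  have : (A.card : ℝ) ≤ 2 ^ L x := by
    rw [mul_one_div, div_le_one hpow] at hAsum
    exact hAsum
  calc (G x : ℝ) = (B.card : ℝ) := by rw [hBcard]
    _ ≤ (A.card : ℝ) := by exact_mod_cast Finset.card_le_card hBA
    _ ≤ 2 ^ L x := this

/-- Deterministic guessing by non-decreasing code length (Theorem 3, deterministic part):
if `L` satisfies the Kraft inequality and the bijection `G : S → {1, …, |S|}` orders `S`
by non-decreasing `L`, then `∑_x P(x) G(x)^ρ ≤ 2^ρ ∑_x P(x) 2^{ρ L(x)}`. -/
theorem deterministic_guessing_moment_bound {S : Type*} [Fintype S] [Nonempty S]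
    (L : S → ℕ) (hKraft : ∑ x : S, (1 : ℝ) / 2 ^ L x ≤ 1)
    (G : S → ℕ) (hGinj : Function.Injective G)
    (hGrange : ∀ x, G x ∈ Finset.Icc 1 (Fintype.card S))
    (hGmono : ∀ x x', L x < L x' → G x < G x')
    (P : S → ℝ) (hP0 : ∀ x, 0 ≤ P x) (hP1 : ∑ x : S, P x = 1)
    (ρ : ℝ) (hρ : 0 < ρ) :
    ∑ x : S, P x * (G x : ℝ) ^ ρ ≤
      (2 : ℝ) ^ ρ * ∑ x : S, P x * (2 : ℝ) ^ (ρ * (L x : ℝ)) := by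
  rw [Finset.mul_sum]
  apply Finset.sum_le_sum
  intro x _
  have key := guess_le_pow L hKraft G hGinj hGrange hGmono x
  have h1 : (G x : ℝ) ^ ρ ≤ ((2 : ℝ) ^ L x) ^ ρ :=
    Real.rpow_le_rpow (Nat.cast_nonneg _) key hρ.le
  have h2 : ((2 : ℝ) ^ L x) ^ ρ = (2 : ℝ) ^ (ρ * (L x : ℝ)) := by
    rw [← Real.rpow_natCast 2 (L x), ← Real.rpow_mul (by norm_num), mul_comm]
  have h3 : (1 : ℝ) ≤ (2 : ℝ) ^ ρ := Real.one_le_rpow (by norm_num) hρ.le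
  calc P x * (G x : ℝ) ^ ρ ≤ P x * (2 : ℝ) ^ (ρ * (L x : ℝ)) := by
        rw [← h2]; exact mul_le_mul_of_nonneg_left h1 (hP0 x)
    _ ≤ (2 : ℝ) ^ ρ * (P x * (2 : ℝ) ^ (ρ * (L x : ℝ))) := by
        nth_rewrite 1 [← one_mul (P x * _)]
        apply mul_le_mul_of_nonneg_right h3
        exact mul_nonneg (hP0 x) (Real.rpow_nonneg (by norm_num) _)
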